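/- For the asymmetric random walk with 0 < q < p, p + q = 1, whose starting point X_0 is chosen uniformly at random from T_N = {0,1,…,N}, for any fixed β ∈ (0,1), the probability that the site ⌊βN⌋ is visited before the exit time τ_N converges to β as N → ∞. -/

import Mathlib

open Filter Topology

/-- Position of the nearest-neighbor walk after the steps `w` (`true` = one step right,
`false` = one step left), started from `x`. -/
def walkPos (x : ℤ) (w : List Bool) : ℤ :=
  x + (w.count true : ℤ) - (w.count false : ℤ)

/-- `w` is the step sequence of a trajectory on `{0, 1, …, N}` started at `x` and run
exactly until the exit time `τ_N = T_0 ∧ T_N`: all positions strictly before the last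
step lie strictly inside `(0, N)`, and the final position is `0` or `N`. -/
def IsExitPath (N : ℕ) (x : ℤ) (w : List Bool) : Prop :=
  (∀ k < w.length, 0 < walkPos x (w.take k) ∧ walkPos x (w.take k) < (N : ℤ)) ∧
    (walkPos x w = 0 ∨ walkPos x w = (N : ℤ))

/-- Probability weight of the step sequence `w` when each step goes right with
probability `p` and left with probability `1 - p`, independently. -/
noncomputable def wt (p : ℝ) (w : List Bool) : ℝ :=
  p ^ w.count true * (1 - p) ^ w.count false

/-- `prob N p x S` is the probability, for the walk on `{0, …, N}` with right-step
probability `p` started at `x` and stopped at the exit time `τ_N`, that its stopped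
trajectory (recorded as the step sequence up to time `τ_N`) satisfies `S`. -/
noncomputable def prob (N : ℕ) (p : ℝ) (x : ℤ) (S : List Bool → Prop) : ℝ :=
  ∑' w : List Bool, Set.indicator {w | IsExitPath N x w ∧ S w} (wt p) w

/-- Expectation of `f` of the stopped trajectory for the walk started at `x`. -/
noncomputable def expect (N : ℕ) (p : ℝ) (x : ℤ) (f : List Bool → ℝ) : ℝ :=
  ∑' w : List Bool, Set.indicator {w | IsExitPath N x w} (fun w => wt p w * f w) w

/-- Probability for the walk whose starting point is uniformly distributed on
`{0, 1, …, N}`; the event `S` may depend on the starting point. -/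
noncomputable def probUniform (N : ℕ) (p : ℝ) (S : ℤ → List Bool → Prop) : ℝ :=
  (∑ x ∈ Finset.range (N + 1), prob N p (x : ℤ) (S (x : ℤ))) / (N + 1)

/-- The set of sites visited by the stopped walk up to time `τ_N` (time `0` included). -/
def rangeSet (x : ℤ) (w : List Bool) : Finset ℤ :=
  (Finset.range (w.length + 1)).image fun k => walkPos x (w.take k)

/-- The range `R_N`: the number of distinct sites visited up to the exit time. -/
def rangeCount (x : ℤ) (w : List Bool) : ℕ := (rangeSet x w).card

/-- The local time `G(y) = Σ_{k=0}^{τ_N} 1_{X_k = y}` of the stopped trajectory `w`. -/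
def localTime (x y : ℤ) (w : List Bool) : ℕ :=
  ((Finset.range (w.length + 1)).filter fun k => walkPos x (w.take k) = y).card

/-- The event `T_y < τ_N`: the walk started at `x` visits `y` at some time
`k ≥ 1` strictly before the end of the stopped trajectory `w`. -/
def hitsBefore (x y : ℤ) (w : List Bool) : Prop :=
  ∃ k, 1 ≤ k ∧ k < w.length ∧ walkPos x (w.take k) = y
namespace RW
variable {p : ℝ}

lemma wt_nil : wt p [] = 1 := by simp [wt]

lemma wt_cons (c : Bool) (w : List Bool) :
    wt p (c :: w) = (if c then p else 1 - p) * wt p w := by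
  cases c <;> simp [wt, List.count_cons, pow_succ] <;> ring

lemma wt_append (w u : List Bool) : wt p (w ++ u) = wt p w * wt p u := by
  simp [wt, List.count_append, pow_add]; ring

lemma wt_nonneg (hp0 : 0 ≤ p) (hp1 : p ≤ 1) (w : List Bool) : 0 ≤ wt p w := by
  have : (0:ℝ) ≤ 1 - p := by linarith
  exact mul_nonneg (pow_nonneg hp0 _) (pow_nonneg this _)

lemma walkPos_nil (x : ℤ) : walkPos x [] = x := by simp [walkPos]

lemma walkPos_cons (x : ℤ) (c : Bool) (w : List Bool) :
    walkPos x (c :: w) = walkPos (x + if c then 1 else -1) w := by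
  cases c <;> simp [walkPos, List.count_cons] <;> ring

/-- Finsets of all `Bool` lists of a given length. -/
def lenLists : ℕ → Finset (List Bool)
  | 0 => {[]}
  | n + 1 => (lenLists n).image (List.cons true) ∪ (lenLists n).image (List.cons false)

lemma mem_lenLists {n : ℕ} {w : List Bool} : w ∈ lenLists n ↔ w.length = n := by
  induction n generalizing w with
  | zero => simp [lenLists, List.length_eq_zero_iff]
  | succ n ih =>
    cases w with
    | nil => simp [lenLists]
    | cons c t =>
      cases c <;> simp [lenLists, ih]

lemma sum_wt_lenLists (n : ℕ) : ∑ w ∈ lenLists n, wt p w = 1 := by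
  induction n with
  | zero => simp [lenLists, wt_nil]
  | succ n ih =>
    rw [lenLists, Finset.sum_union, Finset.sum_image (by intros; simp_all),
      Finset.sum_image (by intros; simp_all)]
    · simp only [wt_cons, Bool.false_eq_true, if_true, if_false, ← Finset.mul_sum, ih]; ring
    · rw [Finset.disjoint_left]; rintro a ha hb
      simp only [Finset.mem_image] at ha hb
      obtain ⟨_, _, rfl⟩ := ha; obtain ⟨_, _, h⟩ := hb; simp at h

end RW
namespace RW
variable {p : ℝ} {N : ℕ} {x : ℤ}

lemma exit_eq_of_prefix {w₁ w₂ : List Bool} (h₁ : IsExitPath N x w₁)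
    (h₂ : IsExitPath N x w₂) (hpre : w₁ <+: w₂) : w₁ = w₂ := by
  rcases eq_or_lt_of_le hpre.length_le with hl | hl
  · exact hpre.eq_of_length hl
  · exfalso
    have htake : w₂.take w₁.length = w₁ := (List.prefix_iff_eq_take.mp hpre).symm
    have := h₂.1 w₁.length hl
    rw [htake] at this
    rcases h₁.2 with h | h <;> rw [h] at this <;> omega

lemma sum_wt_le_one (hp0 : 0 ≤ p) (hp1 : p ≤ 1) (s : Finset (List Bool))
    (hs : ∀ w ∈ s, IsExitPath N x w) : ∑ w ∈ s, wt p w ≤ 1 := by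
  classical
  set L := s.sup List.length with hL
  have hlen : ∀ w ∈ s, w.length ≤ L := fun w hw => Finset.le_sup hw
  set E : List Bool → Finset (List Bool) := fun w => (lenLists (L - w.length)).image (w ++ ·)
    with hE
  have hEsum : ∀ w ∈ s, ∑ v ∈ E w, wt p v = wt p w := by
    intro w hw
    rw [hE]
    rw [Finset.sum_image (by intros a _ b _ h; exact List.append_cancel_left h)]
    simp only [wt_append, ← Finset.mul_sum, sum_wt_lenLists, mul_one]
  have hdisj : (↑s : Set (List Bool)).PairwiseDisjoint E := by
    intro w₁ h₁ w₂ h₂ hne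
    simp only [Function.onFun]
    rw [Finset.disjoint_left]
    rintro v hv₁ hv₂
    simp only [hE, Finset.mem_image] at hv₁ hv₂
    obtain ⟨u₁, _, rfl⟩ := hv₁
    obtain ⟨u₂, _, h⟩ := hv₂
    have hp₁ : w₁ <+: w₂ ++ u₂ := ⟨u₁, h.symm⟩
    have hp₂ : w₂ <+: w₂ ++ u₂ := ⟨u₂, rfl⟩
    rcases le_total w₁.length w₂.length with hle | hle
    · exact hne (exit_eq_of_prefix (hs _ h₁) (hs _ h₂)
        (List.prefix_of_prefix_length_le hp₁ hp₂ hle))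
    · exact hne (exit_eq_of_prefix (hs _ h₂) (hs _ h₁)
        (List.prefix_of_prefix_length_le hp₂ hp₁ hle)).symm
  have hsub : s.biUnion E ⊆ lenLists L := by
    intro v hv
    simp only [Finset.mem_biUnion] at hv
    obtain ⟨w, hw, hv⟩ := hv
    simp only [hE, Finset.mem_image] at hv
    obtain ⟨u, hu, rfl⟩ := hv
    rw [mem_lenLists, List.length_append, mem_lenLists.mp hu]
    have := hlen w hw; omega
  calc ∑ w ∈ s, wt p w = ∑ w ∈ s, ∑ v ∈ E w, wt p v := by
        exact (Finset.sum_congr rfl hEsum).symm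
    _ = ∑ v ∈ s.biUnion E, wt p v := (Finset.sum_biUnion hdisj).symm
    _ ≤ ∑ v ∈ lenLists L, wt p v :=
        Finset.sum_le_sum_of_subset_of_nonneg hsub (fun v _ _ => wt_nonneg hp0 hp1 v)
    _ = 1 := sum_wt_lenLists L

lemma summable_exit (hp0 : 0 ≤ p) (hp1 : p ≤ 1) :
    Summable (Set.indicator {w | IsExitPath N x w} (wt p)) := by
  apply summable_of_sum_le (c := 1)
  · intro w
    exact Set.indicator_apply_nonneg fun _ => wt_nonneg hp0 hp1 w
  · intro u
    classical
    calc ∑ w ∈ u, Set.indicator {w | IsExitPath N x w} (wt p) w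
        = ∑ w ∈ u.filter (fun w => IsExitPath N x w), wt p w := by
          rw [Finset.sum_filter]
          exact Finset.sum_congr rfl fun w _ => by
            by_cases h : IsExitPath N x w <;> simp [Set.indicator, h]
      _ ≤ 1 := sum_wt_le_one hp0 hp1 _ (fun w hw => (Finset.mem_filter.mp hw).2)

lemma summable_prob (hp0 : 0 ≤ p) (hp1 : p ≤ 1) (S : List Bool → Prop) :
    Summable (fun w => Set.indicator {w | IsExitPath N x w ∧ S w} (wt p) w) := by
  apply Summable.of_nonneg_of_le
    (fun w => Set.indicator_apply_nonneg fun _ => wt_nonneg hp0 hp1 w)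
    (fun w => ?_) (summable_exit hp0 hp1 (N := N) (x := x))
  classical
  by_cases h : IsExitPath N x w ∧ S w
  · simp [Set.indicator, h, h.1]
  · simp only [Set.indicator, Set.mem_setOf_eq, h, if_false]
    split
    · exact wt_nonneg hp0 hp1 w
    · exact le_rfl

lemma prob_nonneg (hp0 : 0 ≤ p) (hp1 : p ≤ 1) (S : List Bool → Prop) :
    0 ≤ prob N p x S :=
  tsum_nonneg fun w => Set.indicator_apply_nonneg fun _ => wt_nonneg hp0 hp1 w

lemma prob_congr {S T : List Bool → Prop} (h : ∀ w, IsExitPath N x w → (S w ↔ T w)) :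
    prob N p x S = prob N p x T := by
  unfold prob
  congr 1
  ext w
  congr 1
  ext v
  simp only [Set.mem_setOf_eq]
  constructor
  · rintro ⟨he, hs⟩; exact ⟨he, (h v he).mp hs⟩
  · rintro ⟨he, hs⟩; exact ⟨he, (h v he).mpr hs⟩

end RW
namespace RW
variable {p : ℝ} {N : ℕ} {x : ℤ}

lemma exitPath_cons (hx0 : 0 < x) (hxN : x < (N : ℤ)) (c : Bool) (t : List Bool) :
    IsExitPath N x (c :: t) ↔ IsExitPath N (x + if c then 1 else -1) t := by
  constructor
  · rintro ⟨hint, hfin⟩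
    refine ⟨fun k hk => ?_, ?_⟩
    · have := hint (k + 1) (by simpa using Nat.succ_lt_succ hk)
      rwa [List.take_succ_cons, walkPos_cons] at this
    · rwa [walkPos_cons] at hfin
  · rintro ⟨hint, hfin⟩
    refine ⟨fun k hk => ?_, ?_⟩
    · cases k with
      | zero => simpa [walkPos_nil] using ⟨hx0, hxN⟩
      | succ k =>
        rw [List.take_succ_cons, walkPos_cons]
        exact hint k (by simpa using Nat.lt_of_succ_lt_succ hk)
    · rwa [walkPos_cons]

lemma not_exit_nil (hx0 : 0 < x) (hxN : x < (N : ℤ)) : ¬ IsExitPath N x [] := by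
  rintro ⟨-, h | h⟩ <;> rw [walkPos_nil] at h <;> omega

lemma prob_rec (hp0 : 0 ≤ p) (hp1 : p ≤ 1) (hx0 : 0 < x) (hxN : x < (N : ℤ))
    (S : List Bool → Prop) :
    prob N p x S = p * prob N p (x + 1) (fun w => S (true :: w))
      + (1 - p) * prob N p (x - 1) (fun w => S (false :: w)) := by
  classical
  set f : List Bool → ℝ := fun w => Set.indicator {w | IsExitPath N x w ∧ S w} (wt p) w
    with hf
  have hinj : Function.Injective (fun ct : Bool × List Bool => ct.1 :: ct.2) := by
    rintro ⟨a, u⟩ ⟨b, v⟩ h; simpa using h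
  have hsupp : Function.support f ⊆ Set.range (fun ct : Bool × List Bool => ct.1 :: ct.2) := by
    intro w hw
    cases w with
    | nil =>
      exfalso
      apply hw
      simp only [hf, Set.indicator_apply_eq_zero, Set.mem_setOf_eq]
      rintro ⟨he, -⟩
      exact absurd he (not_exit_nil hx0 hxN)
    | cons c t => exact ⟨(c, t), rfl⟩
  have hfs : Summable f := summable_prob hp0 hp1 S
  have key : ∀ (c : Bool) (t : List Bool),
      f (c :: t) = (if c then p else 1 - p) *
        Set.indicator {t | IsExitPath N (x + if c then 1 else -1) t ∧ S (c :: t)} (wt p) t := by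
    intro c t
    simp only [hf, Set.indicator_apply, Set.mem_setOf_eq, exitPath_cons hx0 hxN, wt_cons]
    split <;> simp
  have h1 : prob N p x S = ∑' ct : Bool × List Bool, f (ct.1 :: ct.2) :=
    (hinj.tsum_eq hsupp).symm
  rw [h1]
  have h2 : (∑' ct : Bool × List Bool, f (ct.1 :: ct.2))
      = ∑' (c : Bool) (t : List Bool), f (c :: t) :=
    Summable.tsum_prod' (hfs.comp_injective hinj)
      (fun b => hfs.comp_injective (fun u v h => by simpa using h : Function.Injective
        (fun t : List Bool => b :: t)))
  rw [h2, tsum_bool]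
  simp only [key, Bool.false_eq_true, if_false, if_true, tsum_mul_left]
  rw [add_comm]
  norm_num [prob, sub_eq_add_neg]

end RW
namespace RW
variable {p : ℝ} {N : ℕ} {x : ℤ}

lemma exit_nil_zero : IsExitPath N 0 [] := by
  refine ⟨fun k hk => absurd hk (by simp), Or.inl (walkPos_nil 0)⟩

lemma exit_nil_N : IsExitPath N (N : ℤ) [] := by
  refine ⟨fun k hk => absurd hk (by simp), Or.inr (walkPos_nil _)⟩

open Classical in
lemma prob_boundary_zero {S : List Bool → Prop} :
    prob N p 0 S = if S [] then 1 else 0 := by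
  rw [prob, tsum_eq_single ([] : List Bool)]
  · simp only [Set.indicator_apply, Set.mem_setOf_eq, wt_nil]
    by_cases h : S [] <;> simp [h, exit_nil_zero]
  · intro w hw
    rw [Set.indicator_apply_eq_zero]
    rintro ⟨he, -⟩
    cases w with
    | nil => exact (hw rfl).elim
    | cons c t =>
      have := (he.1 0 (by simp)).1
      rw [List.take_zero, walkPos_nil] at this
      omega

open Classical in
lemma prob_boundary_N {S : List Bool → Prop} :
    prob N p (N : ℤ) (S) = if S [] then 1 else 0 := by
  by_cases hN : N = 0
  · subst hN
    rw [show ((0 : ℕ) : ℤ) = (0 : ℤ) from rfl, prob_boundary_zero]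
  rw [prob, tsum_eq_single ([] : List Bool)]
  · simp only [Set.indicator_apply, Set.mem_setOf_eq, wt_nil]
    by_cases h : S [] <;> simp [h, exit_nil_N]
  · intro w hw
    rw [Set.indicator_apply_eq_zero]
    rintro ⟨he, -⟩
    cases w with
    | nil => exact (hw rfl).elim
    | cons c t =>
      have := (he.1 0 (by simp)).2
      rw [List.take_zero, walkPos_nil] at this
      omega

lemma mem_rangeSet_self (w : List Bool) : x ∈ rangeSet x w := by
  rw [rangeSet, Finset.mem_image]
  exact ⟨0, by simp, by simp [walkPos_nil]⟩

lemma rangeSet_nil : rangeSet x [] = {x} := by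
  simp [rangeSet, walkPos_nil]

lemma mem_rangeSet_cons {y : ℤ} (c : Bool) (w : List Bool) :
    y ∈ rangeSet x (c :: w) ↔ y = x ∨ y ∈ rangeSet (x + if c then 1 else -1) w := by
  simp only [rangeSet, Finset.mem_image, Finset.mem_range]
  constructor
  · rintro ⟨k, hk, rfl⟩
    cases k with
    | zero => exact Or.inl (by simp [walkPos_nil])
    | succ k =>
      refine Or.inr ⟨k, by simpa using hk, ?_⟩
      rw [List.take_succ_cons, walkPos_cons]
  · rintro (rfl | ⟨k, hk, rfl⟩)
    · exact ⟨0, by simp, by simp [walkPos_nil]⟩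
    · exact ⟨k + 1, by simpa using hk, by rw [List.take_succ_cons, walkPos_cons]⟩

end RW
namespace RW

lemma rec_unique {p : ℝ} (hp : 0 < p) (hp1 : p < 1) (f g : ℕ → ℝ) (a c : ℕ) (hac : a < c)
    (hf : ∀ x : ℕ, a < x → x < c → f x = p * f (x + 1) + (1 - p) * f (x - 1))
    (hg : ∀ x : ℕ, a < x → x < c → g x = p * g (x + 1) + (1 - p) * g (x - 1))
    (ha : f a = g a) (hc : f c = g c) :
    ∀ k : ℕ, a + k ≤ c → f (a + k) = g (a + k) := by
  set ρ : ℝ := (1 - p) / p with hρdef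
  have hρ0 : 0 ≤ ρ := div_nonneg (by linarith) hp.le
  set d : ℕ → ℝ := fun n => f n - g n with hd
  have hdrec : ∀ x : ℕ, a < x → x < c → d (x + 1) - d x = ρ * (d x - d (x - 1)) := by
    intro x hax hxc
    have h1 := hf x hax hxc
    have h2 := hg x hax hxc
    have : p * (d (x + 1) - d x) = (1 - p) * (d x - d (x - 1)) := by
      simp only [hd]; ring_nf; ring_nf at h1 h2; linarith
    rw [hρdef]
    field_simp
    linarith
  have hD : ∀ k : ℕ, a + k + 1 ≤ c → d (a + k + 1) - d (a + k) = ρ ^ k * (d (a + 1) - d a) := by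
    intro k
    induction k with
    | zero => intro _; simp
    | succ k ih =>
      intro hk
      have h1 : a < a + k + 1 := by omega
      have h2 : a + k + 1 < c := by omega
      have := hdrec (a + k + 1) h1 h2
      rw [show a + k + 1 - 1 = a + k from rfl, ih (by omega)] at this
      rw [show a + (k + 1) + 1 = a + k + 1 + 1 from by ring, show a + (k + 1) = a + k + 1 from by ring, this]
      ring
  have hsum : ∀ k : ℕ, a + k ≤ c →
      d (a + k) = d a + (∑ j ∈ Finset.range k, ρ ^ j) * (d (a + 1) - d a) := by
    intro k
    induction k with
    | zero => intro _; simp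
    | succ k ih =>
      intro hk
      have h1 := hD k hk
      have h2 := ih (by omega)
      rw [show a + (k + 1) = a + k + 1 from by ring, Finset.sum_range_succ]
      have : d (a + k + 1) = d (a + k) + (d (a + k + 1) - d (a + k)) := by ring
      rw [this, h1, h2]
      ring
  have hda : d a = 0 := by simp [hd, ha]
  have hdc : d c = 0 := by simp [hd, hc]
  have hgeom : (1:ℝ) ≤ ∑ j ∈ Finset.range (c - a), ρ ^ j := by
    have h0 : (0:ℕ) ∈ Finset.range (c - a) := by simp; omega
    calc (1:ℝ) = ρ ^ 0 := by simp
      _ ≤ _ := Finset.single_le_sum (fun j _ => pow_nonneg hρ0 j) h0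
  have hΔ : d (a + 1) - d a = 0 := by
    have := hsum (c - a) (by omega)
    rw [show a + (c - a) = c from by omega, hdc, hda] at this
    have hpos : (0:ℝ) < ∑ j ∈ Finset.range (c - a), ρ ^ j := by linarith
    have := this
    nlinarith [hpos]
  intro k hk
  have := hsum k hk
  rw [hΔ, hda, mul_zero, add_zero] at this
  simpa [hd, sub_eq_zero] using this

end RW
namespace RW
variable {p : ℝ} {N : ℕ}

lemma geom_le {r : ℝ} (h0 : 0 ≤ r) (h1 : r < 1) (n : ℕ) :
    ∑ i ∈ Finset.range n, r ^ i ≤ 1 / (1 - r) := by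
  rw [geom_sum_eq h1.ne, show (r ^ n - 1)/(r - 1) = (1 - r ^ n)/(1 - r) by
    rw [← neg_div_neg_eq]; ring_nf]
  have h2 : 0 < 1 - r := by linarith
  have h3 : 0 ≤ r ^ n := pow_nonneg h0 n
  gcongr
  linarith

/-- the affine functions `A + B ρ^n`, `ρ = (1-p)/p`, are harmonic for the walk. -/
lemma affine_rec (hp : 1/2 < p) (hp1 : p < 1) (A B : ℝ) :
    ∀ x : ℕ, 0 < x →
      A + B * ((1 - p)/p) ^ x
        = p * (A + B * ((1 - p)/p) ^ (x + 1)) + (1 - p) * (A + B * ((1 - p)/p) ^ (x - 1)) := by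
  have hp0 : 0 < p := by linarith
  set ρ : ℝ := (1 - p)/p with hρ
  have hkey : p * ρ ^ 2 + (1 - p) = ρ := by
    rw [hρ]; field_simp; ring
  clear_value ρ
  intro x hx
  cases x with
  | zero => omega
  | succ x =>
    have h1 : x + 1 - 1 = x := rfl
    rw [h1]
    have : p * ρ ^ (x + 2) + (1 - p) * ρ ^ x = ρ ^ (x + 1) := by
      have e1 : ρ ^ (x + 2) = ρ ^ x * ρ ^ 2 := by ring
      have e2 : ρ ^ (x + 1) = ρ ^ x * ρ := by ring
      rw [e1, e2]
      linear_combination ρ ^ x * hkey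
    linear_combination B * this - 2 * B * ρ ^ x * hkey

lemma cast_succ_int (n : ℕ) : ((n : ℤ) + 1) = ((n + 1 : ℕ) : ℤ) := by push_cast; ring

lemma cast_pred_int {n : ℕ} (hn : 1 ≤ n) : ((n : ℤ) - 1) = ((n - 1 : ℕ) : ℤ) := by
  have : (((n - 1) : ℕ) : ℤ) = (n : ℤ) - 1 := by omega
  omega

/-- The walk exits with probability 1. -/
lemma Z_eq_one (hp : 1/2 < p) (hp1 : p < 1) (hN : 1 ≤ N) :
    ∀ n : ℕ, n ≤ N → prob N p (n : ℤ) (fun _ => True) = 1 := by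
  have hp0 : (0:ℝ) ≤ p := by linarith
  have key := rec_unique (p := p) (by linarith) hp1
    (fun n => prob N p (n : ℤ) (fun _ => True)) (fun _ => 1) 0 N hN
    (fun x hx0 hxN => by
      have := prob_rec (N := N) (x := (x : ℤ)) hp0 hp1.le
        (by exact_mod_cast hx0) (by exact_mod_cast hxN) (fun _ => True)
      rw [cast_succ_int, cast_pred_int (by omega)] at this
      exact this)
    (fun x hx0 hxN => by ring)
    (by show prob N p ((0:ℕ):ℤ) (fun _ => True) = 1
        rw [Nat.cast_zero, prob_boundary_zero, if_pos trivial])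
    (by show prob N p ((N:ℕ):ℤ) (fun _ => True) = 1
        rw [prob_boundary_N, if_pos trivial])
  intro n hn
  have := key n (by omega)
  simpa using this

end RW
namespace RW
variable {p : ℝ} {N b : ℕ}

/-- shorthand for the hitting event probability started at `n`. -/
noncomputable def uu (N : ℕ) (p : ℝ) (b : ℕ) (n : ℕ) : ℝ :=
  prob N p (n : ℤ) (fun w => ((b : ℕ) : ℤ) ∈ rangeSet (n : ℤ) w)

lemma uu_rec (hp : 1/2 < p) (hp1 : p < 1) {n : ℕ} (h0 : 0 < n) (hN : n < N) (hb : n ≠ b) :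
    uu N p b n = p * uu N p b (n + 1) + (1 - p) * uu N p b (n - 1) := by
  have hp0 : (0:ℝ) ≤ p := by linarith
  rw [uu, prob_rec hp0 hp1.le (by exact_mod_cast h0) (by exact_mod_cast hN)]
  have hne : ((b:ℕ):ℤ) ≠ (n : ℤ) := by exact_mod_cast Ne.symm hb
  have e1 : prob N p ((n:ℤ) + 1) (fun w => ((b:ℕ):ℤ) ∈ rangeSet (n:ℤ) (true :: w))
      = uu N p b (n + 1) := by
    rw [uu, ← cast_succ_int]
    apply prob_congr
    intro w _
    rw [mem_rangeSet_cons]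
    simp [hne]
  have e2 : prob N p ((n:ℤ) - 1) (fun w => ((b:ℕ):ℤ) ∈ rangeSet (n:ℤ) (false :: w))
      = uu N p b (n - 1) := by
    rw [uu, ← cast_pred_int h0]
    apply prob_congr
    intro w _
    rw [mem_rangeSet_cons]
    simp only [Bool.false_eq_true, if_false, hne, false_or]
    rw [sub_eq_add_neg]
  rw [e1, e2]

lemma uu_at_b (hp : 1/2 < p) (hp1 : p < 1) (hN : 1 ≤ N) (hbN : b ≤ N) : uu N p b b = 1 := by
  rw [uu, prob_congr (T := fun _ => True) (fun w _ => by simp [mem_rangeSet_self])]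
  exact Z_eq_one hp hp1 hN b hbN

lemma uu_at_zero (hb : 1 ≤ b) : uu N p b 0 = 0 := by
  classical
  rw [uu, Nat.cast_zero, prob_boundary_zero, if_neg]
  rw [rangeSet_nil]
  simp
  omega

lemma uu_at_N (hbN : b < N) : uu N p b N = 0 := by
  classical
  rw [uu, prob_boundary_N, if_neg]
  rw [rangeSet_nil]
  simp
  omega

lemma uu_eval_low (hp : 1/2 < p) (hp1 : p < 1) (hb : 1 ≤ b) (hbN : b < N) :
    ∀ n ≤ b, uu N p b n = (1 - ((1-p)/p) ^ n) / (1 - ((1-p)/p) ^ b) := by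
  have hp0 : (0:ℝ) < p := by linarith
  set ρ : ℝ := (1 - p)/p with hρ
  have hρ0 : 0 < ρ := div_pos (by linarith) hp0
  have hρ1 : ρ < 1 := by rw [hρ, div_lt_one hp0]; linarith
  have hD : 0 < 1 - ρ ^ b := by
    have := pow_lt_one₀ hρ0.le hρ1 (by omega : b ≠ 0)
    linarith
  set D : ℝ := 1 - ρ ^ b with hDdef
  have key := rec_unique (p := p) (by linarith) hp1 (uu N p b)
    (fun n => 1 / D + (-1 / D) * ρ ^ n) 0 b hb
    (fun x hx0 hxb => uu_rec hp hp1 hx0 (by omega) (by omega))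
    (fun x hx0 hxb => affine_rec hp hp1 (1 / D) (-1 / D) x hx0)
    (by simp [uu_at_zero hb]; ring)
    (by rw [uu_at_b hp hp1 (by omega) (by omega)]; field_simp; rw [hDdef]; ring)
  intro n hn
  have := key n (by omega)
  rw [zero_add] at this
  rw [this]
  show 1 / D + -1 / D * ρ ^ n = (1 - ρ ^ n) / D
  ring

lemma uu_eval_high (hp : 1/2 < p) (hp1 : p < 1) (hb : 1 ≤ b) (hbN : b < N) :
    ∀ n, b ≤ n → n ≤ N →
      uu N p b n = (((1-p)/p) ^ n - ((1-p)/p) ^ N) / (((1-p)/p) ^ b - ((1-p)/p) ^ N) := by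
  have hp0 : (0:ℝ) < p := by linarith
  set ρ : ℝ := (1 - p)/p with hρ
  have hρ0 : 0 < ρ := div_pos (by linarith) hp0
  have hρ1 : ρ < 1 := by rw [hρ, div_lt_one hp0]; linarith
  have hD : 0 < ρ ^ b - ρ ^ N := by
    have := pow_lt_pow_right_of_lt_one₀ hρ0 hρ1 hbN
    linarith
  set D : ℝ := ρ ^ b - ρ ^ N with hDdef
  have key := rec_unique (p := p) (by linarith) hp1 (uu N p b)
    (fun n => (-ρ ^ N / D) + (1 / D) * ρ ^ n) b N hbN
    (fun x hx0 hxb => uu_rec hp hp1 (by omega) (by omega) (by omega))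
    (fun x hx0 hxb => affine_rec hp hp1 _ _ x (by omega))
    (by rw [uu_at_b hp hp1 (by omega) (by omega)]; field_simp; rw [hDdef]; ring)
    (by rw [uu_at_N hbN]; field_simp; ring)
  intro n hbn hn
  have := key (n - b) (by omega)
  rw [show b + (n - b) = n from by omega] at this
  rw [this]
  show -ρ ^ N / D + 1 / D * ρ ^ n = (ρ ^ n - ρ ^ N) / D
  ring

end RW
namespace RW
variable {p : ℝ} {N b : ℕ}

lemma uu_nonneg (hp : 1/2 < p) (hp1 : p < 1) (n : ℕ) : 0 ≤ uu N p b n :=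
  prob_nonneg (by linarith) hp1.le _

lemma sum_uu_bounds (hp : 1/2 < p) (hp1 : p < 1) (hb : 1 ≤ b) (hbN : b < N) :
    (b + 1 : ℝ) - 1 / (1 - (1-p)/p) ≤ ∑ n ∈ Finset.range (N + 1), uu N p b n ∧
    ∑ n ∈ Finset.range (N + 1), uu N p b n ≤ (b + 1 : ℝ) + (1 / (1 - (1-p)/p)) ^ 2 := by
  have hp0 : (0:ℝ) < p := by linarith
  set ρ : ℝ := (1 - p)/p with hρ
  have hρ0 : 0 < ρ := div_pos (by linarith) hp0
  have hρ1 : ρ < 1 := by rw [hρ, div_lt_one hp0]; linarith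
  set K : ℝ := 1 / (1 - ρ) with hK
  have hρ1' : (0:ℝ) < 1 - ρ := by linarith
  have hK0 : 0 < K := div_pos one_pos hρ1'
  have hK1 : 1 ≤ K := by rw [hK, le_div_iff₀ (by linarith)]; linarith
  have hDb : 0 < 1 - ρ ^ b := by
    have := pow_lt_one₀ hρ0.le hρ1 (by omega : b ≠ 0); linarith
  -- pointwise bounds on [0, b]
  have hlow : ∀ n ≤ b, 1 - ρ ^ n ≤ uu N p b n ∧ uu N p b n ≤ 1 := by
    intro n hn
    rw [uu_eval_low hp hp1 hb hbN n hn, ← hρ]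
    have hmono : ρ ^ b ≤ ρ ^ n := pow_le_pow_of_le_one hρ0.le hρ1.le hn
    have hn1 : ρ ^ n ≤ 1 := pow_le_one₀ hρ0.le hρ1.le
    constructor
    · rw [le_div_iff₀ hDb]
      nlinarith [mul_nonneg (sub_nonneg.2 hn1) (pow_nonneg hρ0.le b)]
    · rw [div_le_one hDb]; linarith
  -- pointwise bound on (b, N]
  have hhigh : ∀ j : ℕ, b + 1 + j ≤ N → uu N p b (b + 1 + j) ≤ ρ ^ (j + 1) * K := by
    intro j hj
    rw [uu_eval_high hp hp1 hb hbN (b + 1 + j) (by omega) hj, ← hρ]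
    have hρb : (0:ℝ) < ρ ^ b := pow_pos hρ0 b
    have hden : ρ ^ b * (1 - ρ) ≤ ρ ^ b - ρ ^ N := by
      have h1 : ρ ^ N ≤ ρ ^ b * ρ := by
        have : ρ ^ N = ρ ^ b * ρ ^ (N - b) := by rw [← pow_add]; congr 1; omega
        rw [this]
        have : ρ ^ (N - b) ≤ ρ ^ 1 := pow_le_pow_of_le_one hρ0.le hρ1.le (by omega)
        nlinarith
      nlinarith
    have hnum : ρ ^ (b + 1 + j) - ρ ^ N ≤ ρ ^ (b + 1 + j) := by
      have : (0:ℝ) ≤ ρ ^ N := pow_nonneg hρ0.le N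
      linarith
    calc (ρ ^ (b + 1 + j) - ρ ^ N) / (ρ ^ b - ρ ^ N)
        ≤ ρ ^ (b + 1 + j) / (ρ ^ b * (1 - ρ)) := by
          exact div_le_div₀ (pow_nonneg hρ0.le _) hnum (mul_pos hρb hρ1') hden
      _ = ρ ^ (j + 1) * K := by
          rw [hK, show b + 1 + j = b + (j + 1) from by omega, pow_add,
            mul_div_mul_left _ _ (ne_of_gt hρb), div_eq_mul_one_div]
  -- split the sum
  have hsplit : ∑ n ∈ Finset.range (N + 1), uu N p b n
      = ∑ n ∈ Finset.range (b + 1), uu N p b n + ∑ n ∈ Finset.Ico (b + 1) (N + 1), uu N p b n := by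
    have h := Finset.sum_Ico_consecutive (fun n => uu N p b n)
      (by omega : 0 ≤ b + 1) (by omega : b + 1 ≤ N + 1)
    simp only [← Finset.range_eq_Ico] at h
    exact h.symm
  have hgeom1 : ∑ n ∈ Finset.range (b + 1), ρ ^ n ≤ K := by
    rw [hK]; exact geom_le hρ0.le hρ1 _
  have hlow_sum : (b + 1 : ℝ) - K ≤ ∑ n ∈ Finset.range (b + 1), uu N p b n := by
    calc (b + 1 : ℝ) - K ≤ ∑ n ∈ Finset.range (b + 1), (1 - ρ ^ n) := by
          rw [Finset.sum_sub_distrib, Finset.sum_const, Finset.card_range, nsmul_eq_mul, mul_one]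
          push_cast
          linarith [hgeom1]
      _ ≤ _ := Finset.sum_le_sum fun n hn => (hlow n (by simpa [Nat.lt_succ_iff] using hn)).1
  have hup_sum1 : ∑ n ∈ Finset.range (b + 1), uu N p b n ≤ (b + 1 : ℝ) := by
    calc ∑ n ∈ Finset.range (b + 1), uu N p b n ≤ ∑ _n ∈ Finset.range (b + 1), (1:ℝ) :=
          Finset.sum_le_sum fun n hn => (hlow n (by simpa [Nat.lt_succ_iff] using hn)).2
      _ = (b + 1 : ℝ) := by simp
  have htail_nonneg : 0 ≤ ∑ n ∈ Finset.Ico (b + 1) (N + 1), uu N p b n :=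
    Finset.sum_nonneg fun n _ => uu_nonneg hp hp1 n
  have htail_up : ∑ n ∈ Finset.Ico (b + 1) (N + 1), uu N p b n ≤ K ^ 2 := by
    rw [Finset.sum_Ico_eq_sum_range]
    have hcnt : N + 1 - (b + 1) = N - b := by omega
    rw [hcnt]
    calc ∑ j ∈ Finset.range (N - b), uu N p b (b + 1 + j)
        ≤ ∑ j ∈ Finset.range (N - b), ρ ^ (j + 1) * K := by
          apply Finset.sum_le_sum
          intro j hj
          exact hhigh j (by simp at hj; omega)
      _ ≤ ∑ j ∈ Finset.range (N - b), ρ ^ j * K := by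
          apply Finset.sum_le_sum
          intro j _
          have : ρ ^ (j + 1) ≤ ρ ^ j := pow_le_pow_of_le_one hρ0.le hρ1.le (by omega)
          nlinarith
      _ = (∑ j ∈ Finset.range (N - b), ρ ^ j) * K := by rw [Finset.sum_mul]
      _ ≤ K * K := by
          have hgeom2 : ∑ j ∈ Finset.range (N - b), ρ ^ j ≤ K := by
            rw [hK]; exact geom_le hρ0.le hρ1 _
          exact mul_le_mul_of_nonneg_right hgeom2 hK0.le
      _ = K ^ 2 := by ring
  constructor
  · rw [hsplit]; linarith
  · rw [hsplit]; linarith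

end RW

/-- Remark 1.3 (asymmetric case): for the walk with fixed `0 < q < p`, `p + q = 1`,
started uniformly at random on `{0, …, N}`, the probability that `⌊βN⌋` is visited
before exit tends to `β`. -/
theorem point_visited_uniform_asymmetric (p q β : ℝ) (hq : 0 < q) (hpq : q < p)
    (hsum : p + q = 1) (hβ0 : 0 < β) (hβ1 : β < 1) :
    Tendsto (fun N : ℕ => probUniform N p
        fun x w => (⌊β * (N : ℝ)⌋ : ℤ) ∈ rangeSet x w)
      atTop (𝓝 β) := by
  have hp12 : 1/2 < p := by linarith
  have hp1 : p < 1 := by linarith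
  have hp0 : (0:ℝ) < p := by linarith
  set ρ : ℝ := (1 - p)/p with hρ
  have hρ0 : 0 < ρ := div_pos (by linarith) hp0
  have hρ1 : ρ < 1 := by rw [hρ, div_lt_one hp0]; linarith
  set K : ℝ := 1 / (1 - ρ) with hK
  have hK0 : 0 < K := div_pos one_pos (by linarith)
  -- the limit of the bounding sequences
  have hlim : ∀ c : ℝ, Tendsto (fun N : ℕ => (β * N + c)/(N + 1)) atTop (𝓝 β) := by
    intro c
    have h0 := tendsto_one_div_add_atTop_nhds_zero_nat (𝕜 := ℝ)
    have h1 : Tendsto (fun N : ℕ => β + (c - β) * (1/((N:ℝ)+1))) atTop (𝓝 (β + (c-β)*0)) :=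
      tendsto_const_nhds.add (h0.const_mul (c-β))
    rw [mul_zero, add_zero] at h1
    apply h1.congr
    intro N
    have hN1 : ((N:ℝ) + 1) ≠ 0 := by positivity
    field_simp
    ring
  apply tendsto_of_tendsto_of_tendsto_of_le_of_le' (hlim (-K)) (hlim (1 + K^2))
  all_goals
    rw [eventually_atTop]
    refine ⟨⌈1/β⌉₊ + 1, fun N hN => ?_⟩
  all_goals
    have hN1 : 1 ≤ N := by omega
    have hβN1 : 1 ≤ β * N := by
      have h1 : (1:ℝ)/β ≤ ⌈1/β⌉₊ := Nat.le_ceil _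
      have h2 : ((⌈1/β⌉₊ : ℝ)) ≤ N := by exact_mod_cast Nat.le_of_succ_le hN
      rw [div_le_iff₀ hβ0] at h1
      nlinarith
    set b : ℕ := (⌊β * (N:ℝ)⌋).toNat with hbdef
    have hfl0 : (0:ℤ) ≤ ⌊β * (N:ℝ)⌋ := by
      apply Int.floor_nonneg.2; positivity
    have hcast : ((b:ℕ):ℤ) = ⌊β * (N:ℝ)⌋ := Int.toNat_of_nonneg hfl0
    have hble : (⌊β * (N:ℝ)⌋ : ℝ) ≤ β * N := Int.floor_le _
    have hbgt : β * N - 1 < (⌊β * (N:ℝ)⌋ : ℝ) := Int.sub_one_lt_floor _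
    have hb1 : 1 ≤ b := by
      have : (1:ℤ) ≤ ⌊β * (N:ℝ)⌋ := by
        apply Int.le_floor.2; push_cast; linarith
      omega
    have hbN : b < N := by
      have : ⌊β * (N:ℝ)⌋ < (N:ℤ) := by
        apply Int.floor_lt.2
        push_cast
        nlinarith
      omega
    have hbR : ((b:ℕ):ℝ) ≤ β * N := by
      rw [show ((b:ℕ):ℝ) = ((⌊β * (N:ℝ)⌋ : ℤ) : ℝ) by exact_mod_cast congrArg Int.cast hcast]
      exact hble
    have hbR2 : β * N - 1 < ((b:ℕ):ℝ) := by
      rw [show ((b:ℕ):ℝ) = ((⌊β * (N:ℝ)⌋ : ℤ) : ℝ) by exact_mod_cast congrArg Int.cast hcast]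
      exact hbgt
    have hsum_bounds := RW.sum_uu_bounds (N := N) (b := b) hp12 hp1 hb1 hbN
    rw [← hρ, ← hK] at hsum_bounds
    have hPU : probUniform N p (fun x w => (⌊β * (N : ℝ)⌋ : ℤ) ∈ rangeSet x w)
        = (∑ n ∈ Finset.range (N + 1), RW.uu N p b n) / (N + 1) := by
      rw [probUniform]
      congr 1
      apply Finset.sum_congr rfl
      intro x _
      rw [RW.uu]
      simp only [← hcast]
    have hden : (0:ℝ) < (N:ℝ) + 1 := by positivity
  · -- lower bound
    rw [hPU]
    rw [div_le_div_iff₀ hden hden]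
    have := hsum_bounds.1
    nlinarith [hsum_bounds.1]
  · -- upper bound
    rw [hPU]
    rw [div_le_div_iff₀ hden hden]
    nlinarith [hsum_bounds.2]
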